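/- Let i ≠ j be indices in {1, …, 2g+2}. For any choice of a symmetric ratio for (i,j) and any choice of a symmetric ratio for (j,i), the associated symmetric discriminants satisfy D_{ij}² = D_{ji}²; that is, D_{ij} = ±D_{ji}. -/

import Mathlib

set_option linter.unnecessarySeqFocus false

open Finset

lemma pairCard {n : ℕ} (S : Finset (Fin n)) {k : Fin n} (hk : k ∈ S) :
    (S.filter (fun k' => k < k')).card + (S.filter (fun k' => k' < k)).card = S.card - 1 := by
  have hdis : Disjoint (S.filter (fun k' => k < k')) (S.filter (fun k' => k' < k)) := by
    rw [Finset.disjoint_left]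
    intro x hx hx'
    simp only [Finset.mem_filter] at hx hx'
    exact absurd hx'.2 (not_lt.mpr hx.2.le)
  have huni : S.filter (fun k' => k < k') ∪ S.filter (fun k' => k' < k) = S.erase k := by
    ext x
    by_cases hxS : x ∈ S <;>
      simp only [hxS, Finset.mem_union, Finset.mem_filter, Finset.mem_erase, true_and, and_true,
        false_and, and_false, or_false, Fin.lt_def, Fin.ext_iff, ne_eq] <;> omega
  rw [← Finset.card_union_of_disjoint hdis, huni, Finset.card_erase_of_mem hk]

lemma pairProd {K : Type*} [CommMonoid K] {n : ℕ} (S : Finset (Fin n)) (c : Fin n → K) :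
    ∏ k ∈ S, ∏ k' ∈ S.filter (fun k' => k < k'), (c k * c k') = (∏ k ∈ S, c k) ^ (S.card - 1) := by
  have hsplit : ∀ k ∈ S, ∏ k' ∈ S.filter (fun k' => k < k'), (c k * c k')
      = c k ^ (S.filter (fun k' => k < k')).card * ∏ k' ∈ S.filter (fun k' => k < k'), c k' := by
    intro k _
    rw [Finset.prod_mul_distrib, Finset.prod_const]
  rw [Finset.prod_congr rfl hsplit, Finset.prod_mul_distrib]
  have hswap : ∏ k ∈ S, ∏ k' ∈ S.filter (fun k' => k < k'), c k'
      = ∏ k ∈ S, c k ^ (S.filter (fun k' => k' < k)).card := by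
    rw [Finset.prod_comm' (t' := S) (s' := fun k' => S.filter (fun k => k < k'))]
    · exact Finset.prod_congr rfl fun k _ => Finset.prod_const _
    · intro x y
      simp only [Finset.mem_filter]
      tauto
  rw [hswap, ← Finset.prod_mul_distrib, ← Finset.prod_pow]
  refine Finset.prod_congr rfl fun k hk => ?_
  rw [← pow_add, pairCard S hk]

/-- For any choices of symmetric ratios for `(i,j)` and for `(j,i)`, the
associated symmetric discriminants satisfy `D_{ij}² = D_{ji}²`, i.e. `D_{ij} = ±D_{ji}`. -/
theorem symmetric_discriminant_symmetry
    (g : ℕ) (hg : 1 ≤ g) (K : Type*) [Field K]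
    (α : Fin (2*g+2) → K) (hα : Function.Injective α)
    (d : Fin (2*g+2) → K)
    (hd : ∀ m, d m = ∏ n ∈ univ.erase m, (α m - α n))
    (i j : Fin (2*g+2)) (hij : i ≠ j)
    (p : K) (hp : p ^ (4*g) = (d j / d i) ^ 2)
    (ℓij : Fin (2*g+2) → K)
    (hℓij : ∀ k, ℓij k = p * (α i - α k) / (α j - α k))
    (q : K) (hq : q ^ (4*g) = (d i / d j) ^ 2)
    (ℓji : Fin (2*g+2) → K)
    (hℓji : ∀ k, ℓji k = q * (α j - α k) / (α i - α k))
    (Dij : K)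
    (hDij : Dij = (∏ k ∈ univ \ {i, j}, ℓij k) ^ 2 *
      ∏ k ∈ univ \ {i, j}, ∏ k' ∈ (univ \ {i, j}).filter (fun k' => k < k'),
        (ℓij k - ℓij k') ^ 2)
    (Dji : K)
    (hDji : Dji = (∏ k ∈ univ \ {i, j}, ℓji k) ^ 2 *
      ∏ k ∈ univ \ {i, j}, ∏ k' ∈ (univ \ {i, j}).filter (fun k' => k < k'),
        (ℓji k - ℓji k') ^ 2) :
    Dij ^ 2 = Dji ^ 2 := by
  set S : Finset (Fin (2*g+2)) := univ \ {i, j} with hS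
  have hmemS : ∀ k, k ∈ S ↔ k ≠ i ∧ k ≠ j := by
    intro k; simp [hS, not_or]
  have hαij : α i - α j ≠ 0 := sub_ne_zero.mpr fun h => hij (hα h)
  have hαji : α j - α i ≠ 0 := sub_ne_zero.mpr fun h => hij (hα h).symm
  have hiS : ∀ k ∈ S, α i - α k ≠ 0 := fun k hk =>
    sub_ne_zero.mpr fun h => ((hmemS k).mp hk).1 (hα h).symm
  have hjS : ∀ k ∈ S, α j - α k ≠ 0 := fun k hk =>
    sub_ne_zero.mpr fun h => ((hmemS k).mp hk).2 (hα h).symm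
  have hjnotS : j ∉ S := by simp [hmemS]
  have hinotS : i ∉ S := by simp [hmemS]
  have hcardS : S.card = 2 * g := by
    rw [hS, Finset.card_sdiff_of_subset (Finset.subset_univ _), Finset.card_univ, Fintype.card_fin,
      Finset.card_pair hij]
    omega
  -- the products of differences
  set A := ∏ k ∈ S, (α i - α k) with hA
  set B := ∏ k ∈ S, (α j - α k) with hB
  have hA0 : A ≠ 0 := Finset.prod_ne_zero_iff.mpr hiS
  have hB0 : B ≠ 0 := Finset.prod_ne_zero_iff.mpr hjS
  have heq1 : univ.erase i = insert j S := by
    ext x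
    simp only [Finset.mem_erase, Finset.mem_univ, and_true, Finset.mem_insert, hmemS, ne_eq]
    constructor
    · intro h
      by_cases hxj : x = j
      · exact Or.inl hxj
      · exact Or.inr ⟨h, hxj⟩
    · rintro (rfl | ⟨h, _⟩)
      · exact fun h => hij h.symm
      · exact h
  have heq2 : univ.erase j = insert i S := by
    ext x
    simp only [Finset.mem_erase, Finset.mem_univ, and_true, Finset.mem_insert, hmemS, ne_eq]
    constructor
    · intro h
      by_cases hxi : x = i
      · exact Or.inl hxi
      · exact Or.inr ⟨hxi, h⟩
    · rintro (rfl | ⟨_, h⟩)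
      · exact hij
      · exact h
  have hdi : d i = (α i - α j) * A := by
    rw [hd, heq1, Finset.prod_insert hjnotS, hA]
  have hdj : d j = (α j - α i) * B := by
    rw [hd, heq2, Finset.prod_insert hinotS, hB]
  have hdi0 : d i ≠ 0 := by rw [hdi]; exact mul_ne_zero hαij hA0
  have hdj0 : d j ≠ 0 := by rw [hdj]; exact mul_ne_zero hαji hB0
  -- squares of the full products are 1
  have hprodij : ∏ k ∈ S, ℓij k = p ^ (2 * g) * A / B := by
    rw [Finset.prod_congr rfl fun k _ => hℓij k, Finset.prod_div_distrib,
      Finset.prod_mul_distrib, Finset.prod_const, hcardS, hA, hB]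
  have hprodji : ∏ k ∈ S, ℓji k = q ^ (2 * g) * B / A := by
    rw [Finset.prod_congr rfl fun k _ => hℓji k, Finset.prod_div_distrib,
      Finset.prod_mul_distrib, Finset.prod_const, hcardS, hB, hA]
  have hp2 : (p ^ (2 * g)) ^ 2 = (d j / d i) ^ 2 := by
    rw [← hp, ← pow_mul]; ring_nf
  have hq2 : (q ^ (2 * g)) ^ 2 = (d i / d j) ^ 2 := by
    rw [← hq, ← pow_mul]; ring_nf
  have hPij2 : (∏ k ∈ S, ℓij k) ^ 2 = 1 := by
    rw [hprodij, div_pow, mul_pow, hp2, hdi, hdj]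
    field_simp
    ring
  have hPji2 : (∏ k ∈ S, ℓji k) ^ 2 = 1 := by
    rw [hprodji, div_pow, mul_pow, hq2, hdi, hdj]
    field_simp
    ring
  -- pairwise identity
  have hce : ∀ k ∈ S, ℓij k * ℓji k = p * q := by
    intro k hk
    rw [hℓij, hℓji]
    field_simp [hiS k hk, hjS k hk]
  have hkey : (∏ k ∈ S, ∏ k' ∈ S.filter (fun k' => k < k'), (ℓji k - ℓji k') ^ 2)
        * (∏ k ∈ S, ℓij k) ^ (S.card - 1)
      = (∏ k ∈ S, ℓji k) ^ (S.card - 1)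
        * ∏ k ∈ S, ∏ k' ∈ S.filter (fun k' => k < k'), (ℓij k - ℓij k') ^ 2 := by
    rw [← pairProd S ℓij, ← pairProd S ℓji, ← Finset.prod_mul_distrib, ← Finset.prod_mul_distrib]
    refine Finset.prod_congr rfl fun k hk => ?_
    rw [← Finset.prod_mul_distrib, ← Finset.prod_mul_distrib]
    refine Finset.prod_congr rfl fun k' hk' => ?_
    have h1 := hce k hk
    have h2 := hce k' (Finset.mem_filter.mp hk').1
    linear_combination (ℓji k * ℓij k' - ℓji k' * ℓij k) * (h1 - h2)
  -- conclude
  have h1 : ((∏ k ∈ S, ℓij k) ^ (S.card - 1)) ^ 2 = 1 := by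
    have h : ((∏ k ∈ S, ℓij k) ^ (S.card - 1)) ^ 2 = ((∏ k ∈ S, ℓij k) ^ 2) ^ (S.card - 1) := by
      ring
    rw [h, hPij2, one_pow]
  have h2 : ((∏ k ∈ S, ℓji k) ^ (S.card - 1)) ^ 2 = 1 := by
    have h : ((∏ k ∈ S, ℓji k) ^ (S.card - 1)) ^ 2 = ((∏ k ∈ S, ℓji k) ^ 2) ^ (S.card - 1) := by
      ring
    rw [h, hPji2, one_pow]
  have hkey2 := congrArg (fun x => x ^ 2) hkey
  simp only [mul_pow, h1, h2, mul_one, one_mul] at hkey2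
  rw [hDij, hDji, mul_pow, mul_pow, ← pow_mul, ← pow_mul, mul_comm 2 2, pow_mul, pow_mul,
    hPij2, hPji2, one_pow, one_mul, one_mul, hkey2]
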